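/- If a point x lies in the interior of S₁ and, for every t ∈ [0,1], the displaced point τ_{2,1}(t)x lies in the interior of S₂, then the additive/subtractive topological sensitivity limit lim_{ε→0⁺} ε^{-d} ∫₀¹ μ^d(C(x,ε) ∩ τ_{1,2}(t)S₂) dt equals 1, where C(x,ε) is the open cube of side ε centered at x. -/

import Mathlib

open MeasureTheory Set Filter

variable {d : ℕ}

/-- The open cube of side `ε` centered at `x`. -/
def cube {d : ℕ} (x : EuclideanSpace ℝ (Fin d)) (ε : ℝ) : Set (EuclideanSpace ℝ (Fin d)) :=
  {y | ∀ i : Fin d, y i ∈ Set.Ioo (x i - ε / 2) (x i + ε / 2)}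

lemma volume_cube {d : ℕ} (x : EuclideanSpace ℝ (Fin d)) {ε : ℝ} (hε : 0 ≤ ε) :
    volume (cube x ε) = ENNReal.ofReal (ε ^ d) := by
  have : cube x ε
      = (MeasurableEquiv.toLp 2 (Fin d → ℝ)).symm ⁻¹'
        (Set.univ.pi fun i => Set.Ioo (x i - ε/2) (x i + ε/2)) := by
    ext y; simp [cube, MeasurableEquiv.toLp_symm_apply, Set.mem_pi]
  rw [this, (EuclideanSpace.volume_preserving_symm_measurableEquiv_toLp (Fin d)).measure_preimage
    (MeasurableSet.univ_pi fun i => measurableSet_Ioo).nullMeasurableSet,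
    volume_pi_pi]
  simp [Real.volume_Ioo, ← ENNReal.ofReal_pow hε]

lemma cube_subset_ball {d : ℕ} (x : EuclideanSpace ℝ (Fin d)) {ε δ : ℝ} (hε : 0 < ε)
    (h : (d + 1 : ℝ) * ε < δ) : cube x ε ⊆ Metric.ball x δ := by
  intro y hy
  have hd : dist y x ≤ Real.sqrt (d * (ε/2)^2) := by
    rw [EuclideanSpace.dist_eq]
    apply Real.sqrt_le_sqrt
    calc ∑ i, dist (y i) (x i) ^ 2 ≤ ∑ _i : Fin d, (ε/2)^2 := by
          apply Finset.sum_le_sum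
          intro i _
          have h1 := (hy i).1
          have h2 := (hy i).2
          have : |y i - x i| ≤ ε/2 := by
            rw [abs_le]; constructor <;> simp at h1 h2 ⊢ <;> linarith
          calc dist (y i) (x i) ^ 2 = |y i - x i| ^ 2 := by rw [Real.dist_eq]
            _ ≤ (ε/2)^2 := by nlinarith [abs_nonneg (y i - x i)]
      _ = d * (ε/2)^2 := by simp [Finset.sum_const]
  have hs : Real.sqrt (d * (ε/2)^2) = Real.sqrt d * (ε/2) := by
    rw [Real.sqrt_mul (by positivity), Real.sqrt_sq (by positivity)]
  have hsd : Real.sqrt d ≤ (d : ℝ) + 1 := by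
    rw [show (d : ℝ) + 1 = Real.sqrt (((d:ℝ)+1)^2) from (Real.sqrt_sq (by positivity)).symm]
    apply Real.sqrt_le_sqrt; nlinarith [Nat.cast_nonneg (α := ℝ) d]
  have : dist y x < δ := by
    have : Real.sqrt d * (ε/2) ≤ ((d:ℝ)+1) * (ε/2) := by
      apply mul_le_mul_of_nonneg_right hsd (by positivity)
    rw [hs] at hd; nlinarith
  exact Metric.mem_ball.mpr this

/-- If `x` is interior to `S₁` and the displaced point `τ_{2,1}(t) x = τ_{1,2}(t)⁻¹ x`
is interior to `S₂` for every `t ∈ [0,1]`, then the topological sensitivity limit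
`lim_{ε→0⁺} ε^{-d} ∫₀¹ μ(C(x,ε) ∩ τ_{1,2}(t) S₂) dt = 1`. -/
theorem topological_sensitivity_interior
    (S₁ S₂ : Set (EuclideanSpace ℝ (Fin d)))
    (hS₂ : MeasurableSet S₂)
    (τ : ℝ → (EuclideanSpace ℝ (Fin d) ≃ᵢ EuclideanSpace ℝ (Fin d)))
    (hτ : Continuous fun p : ℝ × EuclideanSpace ℝ (Fin d) => (τ p.1).symm p.2)
    (hjoint : Measurable fun p : ℝ × EuclideanSpace ℝ (Fin d) =>
      Set.indicator S₂ (fun _ => (1 : ENNReal)) ((τ p.1).symm p.2))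
    (x : EuclideanSpace ℝ (Fin d))
    (hx₁ : x ∈ interior S₁)
    (hx₂ : ∀ t ∈ Set.Icc (0:ℝ) 1, (τ t).symm x ∈ interior S₂) :
    Tendsto (fun ε : ℝ =>
        (∫⁻ t in Set.Icc (0:ℝ) 1, volume (cube x ε ∩ (τ t) '' S₂)) / ENNReal.ofReal (ε ^ d))
      (nhdsWithin 0 (Set.Ioi 0)) (nhds 1) := by
  -- uniform radius via compactness
  obtain ⟨δ, hδ, hball⟩ : ∃ δ > 0, ∀ t ∈ Set.Icc (0:ℝ) 1,
      Metric.ball ((τ t).symm x) δ ⊆ S₂ := by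
    have hf : Continuous fun t : ℝ => (τ t).symm x :=
      hτ.comp (continuous_id.prodMk continuous_const)
    have hK : IsCompact ((fun t : ℝ => (τ t).symm x) '' Set.Icc 0 1) :=
      (isCompact_Icc).image hf
    have hsub : ((fun t : ℝ => (τ t).symm x) '' Set.Icc 0 1) ⊆ interior S₂ := by
      rintro _ ⟨t, ht, rfl⟩; exact hx₂ t ht
    obtain ⟨δ, hδ, hsub'⟩ := hK.exists_cthickening_subset_open isOpen_interior hsub
    refine ⟨δ, hδ, fun t ht y hy => ?_⟩
    have hmem : ((fun t : ℝ => (τ t).symm x) t) ∈ ((fun t : ℝ => (τ t).symm x) '' Set.Icc 0 1) :=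
      Set.mem_image_of_mem _ ht
    have : y ∈ Metric.cthickening δ ((fun t : ℝ => (τ t).symm x) '' Set.Icc 0 1) :=
      Metric.mem_cthickening_of_dist_le y _ δ _ hmem (le_of_lt (Metric.mem_ball.mp hy))
    exact interior_subset (hsub' this)
  set ε₀ : ℝ := δ / (d + 1) with hε₀def
  have hε₀ : 0 < ε₀ := by positivity
  have key : ∀ ε ∈ Set.Ioo (0:ℝ) ε₀,
      (∫⁻ t in Set.Icc (0:ℝ) 1, volume (cube x ε ∩ (τ t) '' S₂)) / ENNReal.ofReal (ε ^ d)
      = 1 := by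
    intro ε ⟨hε1, hε2⟩
    have hεδ : (d + 1 : ℝ) * ε < δ := by
      rw [hε₀def] at hε2
      have : (0:ℝ) < (d:ℝ) + 1 := by positivity
      calc (d + 1 : ℝ) * ε < (d+1) * (δ / (d+1)) := by
            apply mul_lt_mul_of_pos_left hε2 this
        _ = δ := by field_simp
    have hinter : ∀ t ∈ Set.Icc (0:ℝ) 1, cube x ε ∩ (τ t) '' S₂ = cube x ε := by
      intro t ht
      apply Set.inter_eq_left.mpr
      intro y hy
      have hdxy : dist y x < δ := Metric.mem_ball.mp (cube_subset_ball x hε1 hεδ hy)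
      have : (τ t).symm y ∈ S₂ := by
        apply hball t ht
        rw [Metric.mem_ball]
        rwa [Isometry.dist_eq (τ t).symm.isometry]
      exact ⟨(τ t).symm y, this, (τ t).apply_symm_apply y⟩
    have hint : (∫⁻ t in Set.Icc (0:ℝ) 1, volume (cube x ε ∩ (τ t) '' S₂))
        = ENNReal.ofReal (ε ^ d) := by
      rw [setLIntegral_congr_fun measurableSet_Icc
        (fun t ht => by
          rw [hinter t ht, volume_cube x hε1.le])]
      rw [setLIntegral_const, Real.volume_Icc]
      simp
    rw [hint]
    exact ENNReal.div_self (by simp [ENNReal.ofReal_eq_zero]; positivity)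
      ENNReal.ofReal_ne_top
  have hev : (fun ε : ℝ =>
        (∫⁻ t in Set.Icc (0:ℝ) 1, volume (cube x ε ∩ (τ t) '' S₂)) / ENNReal.ofReal (ε ^ d))
      =ᶠ[nhdsWithin 0 (Set.Ioi 0)] fun _ => (1 : ENNReal) := by
    filter_upwards [Ioo_mem_nhdsGT_of_mem (Set.mem_Ico.mpr ⟨le_refl 0, hε₀⟩)] with ε hε
    exact key ε hε
  exact Tendsto.congr' hev.symm tendsto_const_nhds
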